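/- Let f : [0,1] → ℝ be continuous, nonnegative, and monotone increasing with f(0)=0 and f(r)>0 for r in (0,1]. Let r ∈ (0,1) and let d_r(z) = (z+r)/(rz+1) be the disk automorphism. Then for every z in the open unit disk, f(|d_r(z)|)·cos(arg d_r(z)) > f(|z|)·cos(arg z), where the function f(|w|)·cos(arg w) is interpreted as f(|w|)·Re(w)/|w| (equal to 0 at w=0). -/

import Mathlib

open Complex Metric

/-- The Möbius transformation `d_ξ(z) = (z+ξ)/(conj ξ · z + 1)` of the unit disk. -/
noncomputable def diskMobius (ξ z : ℂ) : ℂ := (z + ξ) / ((starRingEnd ℂ) ξ * z + 1)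

/-- The model eigenfunction profile `X(w) = f(|w|)·Re(w)/|w|`, with `X(0) = 0`. -/
noncomputable def profileFn (f : ℝ → ℝ) (w : ℂ) : ℝ :=
  if w = 0 then 0 else f ‖w‖ * w.re / ‖w‖

set_option maxHeartbeats 1000000 in
/-- if `f` is continuous, nonnegative and (strictly) monotone increasing on
`[0,1]` with `f 0 = 0` and `f > 0` on `(0,1]`, and `r ∈ (0,1)`, then
`f(|d_r z|)·cos(arg (d_r z)) > f(|z|)·cos(arg z)` for every `z` in the open unit disk. -/
theorem profile_increases_under_mobius (f : ℝ → ℝ)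
    (hcont : ContinuousOn f (Set.Icc 0 1))
    (hnonneg : ∀ x ∈ Set.Icc (0 : ℝ) 1, 0 ≤ f x)
    (hmono : StrictMonoOn f (Set.Icc 0 1))
    (hf0 : f 0 = 0) (hfpos : ∀ x ∈ Set.Ioc (0 : ℝ) 1, 0 < f x)
    (r : ℝ) (hr : r ∈ Set.Ioo (0 : ℝ) 1) :
    ∀ z ∈ ball (0 : ℂ) 1,
      profileFn f (diskMobius (r : ℂ) z) > profileFn f z := by
  obtain ⟨hr0, hr1⟩ := hr
  have hfr : 0 < f r := hfpos r ⟨hr0, le_of_lt hr1⟩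
  have hrne : (r : ℂ) ≠ 0 := by
    simp only [ne_eq, Complex.ofReal_eq_zero]; linarith only [hr0]
  have hr2 : (0 : ℝ) < 1 - r ^ 2 := by
    have := mul_pos (show (0:ℝ) < 1 - r by linarith only [hr1])
      (show (0:ℝ) < 1 + r by linarith only [hr0])
    linarith only [this]
  intro z hz
  rw [mem_ball_zero_iff] at hz
  have hz' : ‖z‖ < 1 := by exact hz
  -- degenerate case z = 0
  by_cases hz0 : z = 0
  · subst hz0
    have hval : diskMobius (r : ℂ) 0 = (r : ℂ) := by
      simp [diskMobius]
    rw [hval, profileFn, profileFn, if_neg hrne, if_pos rfl]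
    rw [Complex.norm_real, Real.norm_eq_abs, abs_of_pos hr0, Complex.ofReal_re]
    rw [mul_div_assoc, div_self (ne_of_gt hr0), mul_one]
    exact hfr
  -- degenerate case z = -r
  by_cases hzr : z + (r : ℂ) = 0
  · have hzval : z = -(r : ℂ) := by linear_combination hzr
    have hw0 : diskMobius (r : ℂ) z = 0 := by
      rw [diskMobius, Complex.conj_ofReal, hzr, zero_div]
    rw [hw0, hzval, profileFn, profileFn, if_pos rfl, if_neg (neg_ne_zero.mpr hrne)]
    rw [norm_neg, Complex.norm_real, Real.norm_eq_abs, abs_of_pos hr0]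
    have h1 : (-(r : ℂ)).re = -r := by simp
    rw [h1]
    have h2 : f r * -r / r = -(f r) := by field_simp
    rw [h2]
    linarith only [hfr]
  -- main case
  obtain ⟨x, hx⟩ : ∃ x, z.re = x := ⟨_, rfl⟩
  obtain ⟨y, hy⟩ : ∃ y, z.im = y := ⟨_, rfl⟩
  obtain ⟨a, ha⟩ : ∃ a, ‖z‖ = a := ⟨_, rfl⟩
  have ha_pos : 0 < a := ha ▸ norm_pos_iff.mpr hz0
  have ha1 : a < 1 := ha ▸ hz'
  have ha2 : a ^ 2 = x ^ 2 + y ^ 2 := by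
    rw [← ha, ← hx, ← hy, Complex.sq_norm, Complex.normSq_apply]; ring
  have hxa : |x| ≤ a := by rw [← ha, ← hx]; exact Complex.abs_re_le_norm z
  have hx2y2 : x ^ 2 + y ^ 2 < 1 := by
    nlinarith only [ha2, ha1, ha_pos]
  have hxgt : -1 < x := by linarith only [neg_abs_le x, hxa, ha1]
  -- the denominator
  have hden_re : ((r : ℂ) * z + 1).re = r * x + 1 := by rw [← hx]; simp
  have hden_im : ((r : ℂ) * z + 1).im = r * y := by rw [← hy]; simp
  have hdenre_pos : 0 < r * x + 1 := by
    have := mul_pos hr0 (show (0:ℝ) < x + 1 by linarith only [hxgt])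
    linarith only [this, hr1]
  have hden : ((r : ℂ) * z + 1) ≠ 0 := by
    intro h
    have h0 : ((r : ℂ) * z + 1).re = 0 := by rw [h]; simp
    rw [hden_re] at h0; linarith only [h0, hdenre_pos]
  obtain ⟨Dq, hDqdef⟩ : ∃ D, r ^ 2 * (x ^ 2 + y ^ 2) + 2 * r * x + 1 = D := ⟨_, rfl⟩
  have hnsq : Complex.normSq ((r : ℂ) * z + 1) = Dq := by
    rw [Complex.normSq_apply, hden_re, hden_im, ← hDqdef]; ring
  have hDq_pos : 0 < Dq := by
    have h1 := mul_pos hdenre_pos hdenre_pos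
    have h2 := sq_nonneg (r * y)
    linarith only [hDqdef, h1, h2]
  obtain ⟨w, hw⟩ : ∃ w, (z + (r : ℂ)) / ((r : ℂ) * z + 1) = w := ⟨_, rfl⟩
  have hwd : diskMobius (r : ℂ) z = w := by
    rw [← hw, diskMobius, Complex.conj_ofReal]
  have hw_ne : w ≠ 0 := by rw [← hw]; exact div_ne_zero hzr hden
  have hnum_re : (z + (r : ℂ)).re = x + r := by rw [← hx]; simp
  have hnum_im : (z + (r : ℂ)).im = y := by rw [← hy]; simp
  obtain ⟨N, hNdef⟩ : ∃ N, r * (1 + x ^ 2 + y ^ 2) + (1 + r ^ 2) * x = N := ⟨_, rfl⟩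
  have hRew : w.re = N / Dq := by
    rw [← hw, Complex.div_re, hnsq, hden_re, hden_im, hnum_re, hnum_im, ← hNdef]
    ring
  obtain ⟨b, hb⟩ : ∃ b, ‖w‖ = b := ⟨_, rfl⟩
  have hb_pos : 0 < b := hb ▸ norm_pos_iff.mpr hw_ne
  have hb2 : b ^ 2 * Dq = (x + r) ^ 2 + y ^ 2 := by
    have h1 : b ^ 2 = Complex.normSq (z + (r : ℂ)) / Dq := by
      rw [← hb, Complex.sq_norm, ← hw, Complex.normSq_div, hnsq]
    rw [h1, div_mul_cancel₀ _ (ne_of_gt hDq_pos), Complex.normSq_apply, hnum_re, hnum_im]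
    ring
  have h1rho : (0:ℝ) < 1 - (x ^ 2 + y ^ 2) := by linarith only [hx2y2]
  have hlt : (x + r) ^ 2 + y ^ 2 < Dq := by
    rw [← hDqdef]
    have := mul_pos hr2 h1rho
    linarith only [this]
  have hb21 : b ^ 2 < 1 ^ 2 := by
    have h5 : b ^ 2 * Dq < 1 ^ 2 * Dq := by linarith only [hb2, hlt]
    exact lt_of_mul_lt_mul_right h5 (le_of_lt hDq_pos)
  have hb1 : b < 1 :=
    (pow_lt_pow_iff_left₀ (le_of_lt hb_pos) zero_le_one (by norm_num : (2:ℕ) ≠ 0)).mp hb21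
  have haI : a ∈ Set.Icc (0 : ℝ) 1 := ⟨le_of_lt ha_pos, le_of_lt ha1⟩
  have hbI : b ∈ Set.Icc (0 : ℝ) 1 := ⟨le_of_lt hb_pos, le_of_lt hb1⟩
  have hE : 0 < 1 + x ^ 2 + y ^ 2 + 2 * r * x := by
    have h1 : (0 : ℝ) < 1 - r := by linarith only [hr1]
    have h2 : (0 : ℝ) < 1 + x ^ 2 + y ^ 2 := by positivity
    have h3 : (0 : ℝ) ≤ (1 + x) ^ 2 + y ^ 2 := by positivity
    have h4 := mul_pos h1 h2
    have h5 := mul_nonneg (le_of_lt hr0) h3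
    linarith only [h4, h5]
  rw [hwd, profileFn, profileFn, if_neg hw_ne, if_neg hz0, hb, ha, hx, hRew]
  have hgoal_eq : f b * (N / Dq) / b = f b * N / (Dq * b) := by
    field_simp
  rw [gt_iff_lt, hgoal_eq, div_lt_div_iff₀ ha_pos (mul_pos hDq_pos hb_pos)]
  -- goal : f a * x * (Dq * b) < f b * N * a
  have hfa0 : 0 ≤ f a := hnonneg a haI
  have hfb0 : 0 ≤ f b := hnonneg b hbI
  -- key algebraic identities
  have e1 : (N * a) ^ 2 = N ^ 2 * (x ^ 2 + y ^ 2) := by rw [mul_pow, ha2]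
  have e2 : (x * (b * Dq)) ^ 2 = x ^ 2 * (((x + r) ^ 2 + y ^ 2) * Dq) := by
    rw [← hb2]; ring
  have e3 : N ^ 2 * (x ^ 2 + y ^ 2) - x ^ 2 * (((x + r) ^ 2 + y ^ 2) * Dq)
      = y ^ 2 * (r * ((1 + x ^ 2 + y ^ 2 + 2 * r * x) * (2 * x + r * (1 + x ^ 2 + y ^ 2)))) := by
    rw [← hNdef, ← hDqdef]; ring
  have hba : b ^ 2 * Dq - a ^ 2 * Dq
      = r * (1 - (x ^ 2 + y ^ 2)) * (2 * x + r * (1 + x ^ 2 + y ^ 2)) := by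
    rw [hb2, ha2, ← hDqdef]; ring
  by_cases hxs : 0 ≤ x
  · -- x ≥ 0 : |w| > |z|, cos arg w ≥ cos arg z ≥ 0
    have hG : 0 < 2 * x + r * (1 + x ^ 2 + y ^ 2) := by positivity
    have hN_pos : 0 < N := by rw [← hNdef]; positivity
    have h5 : a ^ 2 * Dq < b ^ 2 * Dq := by
      have := mul_pos (mul_pos hr0 h1rho) hG
      linarith only [hba, this]
    have hab2 : a ^ 2 < b ^ 2 := lt_of_mul_lt_mul_right h5 (le_of_lt hDq_pos)
    have hab : a < b :=
      (pow_lt_pow_iff_left₀ (le_of_lt ha_pos) (le_of_lt hb_pos) (by norm_num : (2:ℕ) ≠ 0)).mp hab2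
    have hfab : f a < f b := hmono haI hbI hab
    have hsq : (x * (b * Dq)) ^ 2 ≤ (N * a) ^ 2 := by
      have h6 : (0 : ℝ) ≤ y ^ 2 *
          (r * ((1 + x ^ 2 + y ^ 2 + 2 * r * x) * (2 * x + r * (1 + x ^ 2 + y ^ 2)))) := by
        positivity
      linarith only [e1, e2, e3, h6]
    have hcc : x * (b * Dq) ≤ N * a := by
      have h1 : 0 ≤ x * (b * Dq) := by positivity
      have h2 : 0 ≤ N * a := by positivity
      exact (pow_le_pow_iff_left₀ h1 h2 (by norm_num : (2:ℕ) ≠ 0)).mp hsq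
    have s1 : f a * (x * (b * Dq)) ≤ f a * (N * a) :=
      mul_le_mul_of_nonneg_left hcc hfa0
    have s2 : f a * (N * a) < f b * (N * a) :=
      mul_lt_mul_of_pos_right hfab (mul_pos hN_pos ha_pos)
    have s3 : f a * x * (Dq * b) = f a * (x * (b * Dq)) := by ring
    have s4 : f b * N * a = f b * (N * a) := by ring
    rw [s3, s4]; linarith only [s1, s2]
  · push_neg at hxs
    have hfa_pos : 0 < f a := hfpos a ⟨ha_pos, le_of_lt ha1⟩
    by_cases hNn : 0 ≤ N
    · -- X(z) < 0 ≤ X(w)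
      have l1 : f a * x * (Dq * b) < 0 := by
        have h1 : 0 < Dq * b := mul_pos hDq_pos hb_pos
        have h2 : 0 < f a * -x * (Dq * b) :=
          mul_pos (mul_pos hfa_pos (by linarith only [hxs] : (0:ℝ) < -x)) h1
        linarith only [h2]
      have l2 : 0 ≤ f b * N * a :=
        mul_nonneg (mul_nonneg hfb0 hNn) (le_of_lt ha_pos)
      linarith only [l1, l2]
    · push_neg at hNn
      have hGN : 2 * x + r * (1 + x ^ 2 + y ^ 2) = N + (1 - r ^ 2) * x := by
        rw [← hNdef]; ring
      have hG : 2 * x + r * (1 + x ^ 2 + y ^ 2) < 0 := by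
        have h1 : (1 - r ^ 2) * x < 0 := mul_neg_of_pos_of_neg hr2 hxs
        rw [hGN]; linarith only [h1, hNn]
      have h5 : b ^ 2 * Dq < a ^ 2 * Dq := by
        have := mul_neg_of_pos_of_neg (mul_pos hr0 h1rho) hG
        linarith only [hba, this]
      have hab2 : b ^ 2 < a ^ 2 := lt_of_mul_lt_mul_right h5 (le_of_lt hDq_pos)
      have hab : b < a :=
        (pow_lt_pow_iff_left₀ (le_of_lt hb_pos) (le_of_lt ha_pos) (by norm_num : (2:ℕ) ≠ 0)).mp hab2
      have hfba : f b < f a := hmono hbI haI hab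
      have hfb_pos : 0 < f b := hfpos b ⟨hb_pos, le_of_lt hb1⟩
      have hsq : (N * a) ^ 2 ≤ (x * (b * Dq)) ^ 2 := by
        have h2 : r * ((1 + x ^ 2 + y ^ 2 + 2 * r * x) * (2 * x + r * (1 + x ^ 2 + y ^ 2))) ≤ 0 := by
          apply mul_nonpos_of_nonneg_of_nonpos (le_of_lt hr0)
          exact mul_nonpos_of_nonneg_of_nonpos (le_of_lt hE) (le_of_lt hG)
        have h3 := mul_nonpos_of_nonneg_of_nonpos (sq_nonneg y) h2
        linarith only [e1, e2, e3, h3]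
      have hcc : (-N) * a ≤ (-x) * (b * Dq) := by
        have h1 : 0 ≤ (-N) * a := by
          apply mul_nonneg _ (le_of_lt ha_pos); linarith only [hNn]
        have h2 : 0 ≤ (-x) * (b * Dq) := by
          apply mul_nonneg _ (le_of_lt (mul_pos hb_pos hDq_pos)); linarith only [hxs]
        have hsq' : ((-N) * a) ^ 2 ≤ ((-x) * (b * Dq)) ^ 2 := by
          have e4 : ((-N) * a) ^ 2 = (N * a) ^ 2 := by ring
          have e5 : ((-x) * (b * Dq)) ^ 2 = (x * (b * Dq)) ^ 2 := by ring
          rw [e4, e5]; exact hsq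
        exact (pow_le_pow_iff_left₀ h1 h2 (by norm_num : (2:ℕ) ≠ 0)).mp hsq'
      have s1 : f b * ((-N) * a) ≤ f b * ((-x) * (b * Dq)) :=
        mul_le_mul_of_nonneg_left hcc (le_of_lt hfb_pos)
      have s2 : f b * ((-x) * (b * Dq)) < f a * ((-x) * (b * Dq)) :=
        mul_lt_mul_of_pos_right hfba
          (mul_pos (by linarith only [hxs] : (0:ℝ) < -x) (mul_pos hb_pos hDq_pos))
      have s3 : f a * x * (Dq * b) = -(f a * ((-x) * (b * Dq))) := by ring
      have s4 : f b * N * a = -(f b * ((-N) * a)) := by ring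
      rw [s3, s4]; linarith only [s1, s2]
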